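/- Let z be a real random variable whose distribution is atomless. Then for every c > 0, E(|z + c| − |z|) = c − 2·∫₀^c P(z ≤ −x) dx. -/

import Mathlib

open MeasureTheory

/-- **Integral formula for the expected absolute deviation.**
For a continuous (atomless) real random variable `z` and `c > 0`,
`E(|z + c| - |z|) = c - 2 ∫₀^c P(z ≤ -x) dx`. -/
theorem expected_abs_dev_eq
    {Ω : Type*} [MeasurableSpace Ω] (μ : Measure Ω) [IsProbabilityMeasure μ]
    (z : Ω → ℝ) (hz : Measurable z)
    (hatom : ∀ x : ℝ, μ {ω | z ω = x} = 0)
    (c : ℝ) (hc : 0 < c) :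
    ∫ ω, (|z ω + c| - |z ω|) ∂μ =
      c - 2 * ∫ x in (0 : ℝ)..c, (μ {ω | z ω ≤ -x}).toReal := by
  set g : Ω → ℝ := fun ω => min c (max 0 (-z ω)) with hg
  -- pointwise identity
  have hpt : ∀ a : ℝ, |a + c| - |a| = c - 2 * min c (max 0 (-a)) := by
    intro a
    rcases le_total a 0 with ha | ha
    · rcases le_total (a + c) 0 with hac | hac
      · rw [abs_of_nonpos hac, abs_of_nonpos ha,
          min_eq_left (le_max_iff.mpr (Or.inr (by linarith)))]
        ring
      · rw [abs_of_nonneg hac, abs_of_nonpos ha,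
          min_eq_right (max_le hc.le (by linarith)),
          max_eq_right (by linarith)]
        ring
    · rw [abs_of_nonneg ha, abs_of_nonneg (by linarith),
        max_eq_left (by linarith), min_eq_right hc.le]
      ring
  have hgmeas : Measurable g := (measurable_const.min ((measurable_const.max hz.neg)))
  have hgint : Integrable g μ := by
    refine Integrable.mono' (integrable_const c) hgmeas.aestronglyMeasurable
      (Filter.Eventually.of_forall fun ω => ?_)
    rw [Real.norm_eq_abs, abs_of_nonneg (le_min hc.le (le_max_left _ _))]
    exact min_le_left _ _
  have hgnn : 0 ≤ᵐ[μ] g := Filter.Eventually.of_forall fun ω =>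
    le_min hc.le (le_max_left _ _)
  have hgbdd : g ≤ᵐ[μ] fun _ => c := Filter.Eventually.of_forall fun ω => min_le_left _ _
  have layer := hgint.integral_eq_integral_Ioc_meas_le hgnn hgbdd
  -- rewrite LHS
  have hLHS : ∫ ω, (|z ω + c| - |z ω|) ∂μ = c - 2 * ∫ ω, g ω ∂μ := by
    have : ∀ ω, |z ω + c| - |z ω| = c - 2 * g ω := fun ω => hpt (z ω)
    rw [integral_congr_ae (Filter.Eventually.of_forall this),
      integral_sub (integrable_const c) (hgint.const_mul 2),
      integral_const, integral_const_mul]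
    simp
  rw [hLHS, layer]
  congr 2
  rw [intervalIntegral.integral_of_le hc.le]
  refine setIntegral_congr_fun measurableSet_Ioc fun t ht => ?_
  have h1 : {a : Ω | t ≤ g a} = {ω | z ω ≤ -t} := by
    ext ω
    simp only [Set.mem_setOf_eq, hg, le_min_iff, le_max_iff]
    constructor
    · rintro ⟨_, h | h⟩
      · linarith [ht.1]
      · linarith
    · exact fun h => ⟨ht.2, Or.inr (by linarith)⟩
  rw [h1]
  rfl
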